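/- Let a > −1, let m ≥ 1, and let 1 > s₁ ≥ s₂ ≥ ⋯ ≥ s_m ≥ 0 be real numbers. Then ∏_{k=1}^{m} (1 − s_k²)^a · ∏_{1≤j<k≤m} (s_j² − s_k²) · [ ∫_{s₁}^{1} dt₁ ∫_{s₂}^{s₁} dt₂ ⋯ ∫_{s_m}^{s_{m−1}} dt_m ∏_{k=1}^{m} t_k (1 − t_k²)^a · ∏_{1≤j<k≤m} (t_j² − t_k²) ] = ( ∏_{k=1}^{m} 1/(2a+2k) ) · ∏_{k=1}^{m} (1 − s_k²)^{2a+1} · ∏_{1≤j<k≤m} (s_j² − s_k²)². -/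

import Mathlib

open MeasureTheory
open Polynomial Finset Set

noncomputable def Gj (a : ℝ) (k : ℕ) (x : ℝ) : ℝ :=
  -(1 - x ^ 2) ^ (a + 1) * x ^ (2 * k) / (2 * (a + 1 + k))

noncomputable def Pj (a : ℝ) (k : ℕ) : Polynomial ℝ :=
  X ^ k - C ((k : ℝ) / (a + 1 + k)) * X ^ (k - 1)

noncomputable def gj (a : ℝ) (k : ℕ) (x : ℝ) : ℝ :=
  x * (1 - x ^ 2) ^ a * (Pj a k).eval (x ^ 2)

lemma Pj_monic (a : ℝ) (k : ℕ) : (Pj a k).Monic := by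
  rcases k with _ | n
  · simp [Pj]
  · apply Polynomial.monic_X_pow_sub
    push_cast
    calc degree (C (((n:ℝ)+1) / (a + 1 + ((n:ℝ)+1))) * X ^ (n + 1 - 1) : Polynomial ℝ) ≤ (n : ℕ) := by
          simpa using Polynomial.degree_C_mul_X_pow_le (n := n) (((n:ℝ)+1) / (a + 1 + ((n:ℝ)+1)))
      _ < ((n+1 : ℕ) : WithBot ℕ) := by exact_mod_cast Nat.lt_succ_self n

lemma Pj_natDegree (a : ℝ) (k : ℕ) : (Pj a k).natDegree = k := by
  rcases k with _ | n
  · simp [Pj]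
  · rw [Pj]
    rw [Polynomial.natDegree_sub_eq_left_of_natDegree_lt, Polynomial.natDegree_X_pow]
    rw [Polynomial.natDegree_X_pow]
    calc (C (((n+1:ℕ):ℝ) / (a + 1 + ((n+1:ℕ):ℝ))) * X ^ (n+1-1)).natDegree ≤ n+1-1 :=
          Polynomial.natDegree_C_mul_X_pow_le _ _
      _ < n+1 := by omega

lemma Gj_hasDerivAt (a : ℝ) (ha : -1 < a) (k : ℕ) {x : ℝ} (hx0 : 0 < x) (hx1 : x < 1) :
    HasDerivAt (Gj a k)
      (x * (1 - x ^ 2) ^ a * (x ^ (2 * k) - ((k : ℝ) / (a + 1 + k)) * x ^ (2 * (k - 1)))) x := by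
  have hB : 0 < 1 - x ^ 2 := by nlinarith
  have hknn : (0:ℝ) ≤ k := Nat.cast_nonneg k
  have hden : a + 1 + (k:ℝ) ≠ 0 := by linarith
  have h1 : HasDerivAt (fun x : ℝ => 1 - x ^ 2) (-(2 * x)) x := by
    simpa using ((hasDerivAt_pow 2 x).const_sub 1)
  have h2 : HasDerivAt (fun x : ℝ => (1 - x ^ 2) ^ (a + 1))
      (-(2 * x) * (a + 1) * (1 - x ^ 2) ^ (a + 1 - 1)) x :=
    h1.rpow_const (Or.inl hB.ne')
  have h3 := hasDerivAt_pow (2 * k) x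
  have h4 := ((h2.neg.mul h3).div_const (2 * (a + 1 + k)))
  convert h4 using 1
  any_goals rfl
  have h2k : 2 * (a + 1 + (k:ℝ)) ≠ 0 := by positivity
  rw [eq_div_iff h2k]
  have e1 : a + 1 - 1 = a := by ring
  rw [e1]
  have e2 : (1 - x ^ 2) ^ (a + 1) = (1 - x ^ 2) ^ a * (1 - x ^ 2) :=
    Real.rpow_add_one hB.ne' a
  simp only [Pi.neg_apply]
  rw [e2]
  rcases k with _ | n
  · push_cast
    generalize (1 - x ^ 2) ^ a = B
    ring
  · have e3 : 2 * (n + 1) - 1 = 2 * n + 1 := by omega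
    have e4 : 2 * (n + 1) = 2 * n + 2 := by omega
    have e5 : (n + 1 : ℕ) - 1 = n := by omega
    rw [e3, e4, e5]
    have hd : a + 1 + ((n:ℝ) + 1) ≠ 0 := by
      have : (0:ℝ) ≤ (n:ℝ) := Nat.cast_nonneg n
      linarith
    have hc : ((n:ℝ) + 1) / (a + 1 + ((n:ℝ) + 1)) * (a + 1 + ((n:ℝ) + 1)) = (n:ℝ) + 1 :=
      div_mul_cancel₀ _ hd
    push_cast
    generalize (1 - x ^ 2) ^ a = B
    linear_combination (-(2 * x * B * x ^ (2 * n))) * hc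

lemma Gj_continuous (a : ℝ) (ha : -1 < a) (k : ℕ) : Continuous (Gj a k) := by
  have h1 : Continuous fun x : ℝ => (1 - x ^ 2) ^ (a + 1) :=
    (continuous_const.sub (continuous_pow 2)).rpow_const fun x => Or.inr (by linarith)
  exact (((h1.neg).mul (continuous_pow (2 * k))).div_const _)

lemma Gj_one (a : ℝ) (ha : -1 < a) (k : ℕ) : Gj a k 1 = 0 := by
  have h : ((1:ℝ) - 1 ^ 2) = 0 := by norm_num
  simp [Gj, h, Real.zero_rpow (by linarith : a + 1 ≠ 0)]

lemma gj_intervalIntegrable (a : ℝ) (ha : -1 < a) (k : ℕ) {lo hi : ℝ} (h0 : 0 ≤ lo)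
    (hle : lo ≤ hi) (h1 : hi ≤ 1) : IntervalIntegrable (gj a k) volume lo hi := by
  have i1 : IntervalIntegrable (fun x : ℝ => x ^ a) volume (1 - hi) (1 - lo) :=
    intervalIntegral.intervalIntegrable_rpow' ha
  have i2 : IntervalIntegrable (fun x : ℝ => (1 - x) ^ a) volume lo hi := by
    simpa using (i1.comp_sub_left 1).symm
  have hcont : ContinuousOn (fun x : ℝ => (1 + x) ^ a * (x * (Pj a k).eval (x ^ 2)))
      (Set.uIcc lo hi) := by
    apply ContinuousOn.mul
    · apply ContinuousOn.rpow_const (continuous_const.add continuous_id).continuousOn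
      intro x hx
      rw [Set.uIcc_of_le hle] at hx
      exact Or.inl (by have := hx.1; dsimp; linarith)
    · exact (continuous_id.mul ((Pj a k).continuous_aeval.comp (continuous_pow 2))).continuousOn
  have i3 := i2.mul_continuousOn hcont
  rw [intervalIntegrable_iff_integrableOn_Ioc_of_le hle] at i3 ⊢
  apply i3.congr_fun _ measurableSet_Ioc
  intro x hx
  have hx0 : 0 < x := lt_of_le_of_lt h0 hx.1
  have hx1 : x ≤ 1 := le_trans hx.2 h1
  have e : ((1 - x) * (1 + x)) ^ a = (1 - x) ^ a * (1 + x) ^ a :=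
    Real.mul_rpow (by linarith) (by linarith)
  have e2 : (1 - x) * (1 + x) = 1 - x ^ 2 := by ring
  simp only [gj]
  rw [← e2, e]
  ring

lemma gj_eq (a : ℝ) (k : ℕ) (x : ℝ) :
    gj a k x = x * (1 - x ^ 2) ^ a * (x ^ (2 * k) - ((k : ℝ) / (a + 1 + k)) * x ^ (2 * (k - 1))) := by
  simp only [gj, Pj]
  rw [Polynomial.eval_sub, Polynomial.eval_mul, Polynomial.eval_pow, Polynomial.eval_pow]
  simp [← pow_mul, mul_comm]

lemma gj_integral (a : ℝ) (ha : -1 < a) (k : ℕ) {lo hi : ℝ} (h0 : 0 ≤ lo)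
    (hle : lo ≤ hi) (h1 : hi ≤ 1) :
    ∫ x in Set.Ioo lo hi, gj a k x = Gj a k hi - Gj a k lo := by
  rw [← integral_Ioc_eq_integral_Ioo, ← intervalIntegral.integral_of_le hle]
  apply intervalIntegral.integral_eq_sub_of_hasDerivAt_of_le hle
    (Gj_continuous a ha k).continuousOn _ (gj_intervalIntegrable a ha k h0 hle h1)
  intro x hx
  rw [gj_eq]
  exact Gj_hasDerivAt a ha k (lt_of_le_of_lt h0 hx.1) (lt_of_lt_of_le hx.2 h1)

lemma indicator_pi_prod {m : ℕ} (S : Fin m → Set ℝ) (f : Fin m → ℝ → ℝ) (t : Fin m → ℝ) :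
    Set.indicator (Set.pi Set.univ S) (fun t => ∏ i, f i (t i)) t
      = ∏ i, Set.indicator (S i) (f i) (t i) := by
  by_cases h : t ∈ Set.pi Set.univ S
  · rw [Set.indicator_of_mem h]
    exact Finset.prod_congr rfl fun i _ =>
      (Set.indicator_of_mem (h i (Set.mem_univ i)) _).symm
  · rw [Set.indicator_of_notMem h]
    rw [Set.mem_univ_pi] at h
    push_neg at h
    obtain ⟨i, hi⟩ := h
    exact (Finset.prod_eq_zero (Finset.mem_univ i) (Set.indicator_of_notMem hi _)).symm

lemma integral_pi_det {m : ℕ} (S : Fin m → Set ℝ) (hS : ∀ i, MeasurableSet (S i))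
    (g : Fin m → ℝ → ℝ) (hg : ∀ k i, IntegrableOn (g k) (S i)) :
    ∫ t in Set.pi Set.univ S, Matrix.det (Matrix.of fun i k => g k (t i))
      = Matrix.det (Matrix.of fun i k => ∫ x in S i, g k x) := by
  have hA : MeasurableSet (Set.pi Set.univ S) := MeasurableSet.univ_pi hS
  rw [← integral_indicator hA]
  have step1 : ∀ t : Fin m → ℝ,
      Set.indicator (Set.pi Set.univ S)
        (fun t => Matrix.det (Matrix.of fun i k => g k (t i))) t
      = ∑ σ : Equiv.Perm (Fin m), (Equiv.Perm.sign σ : ℝ) *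
          ∏ i, Set.indicator (S i) (g (σ i)) (t i) := by
    intro t
    have hdet : ∀ t : Fin m → ℝ, Matrix.det (Matrix.of fun i k => g k (t i))
        = ∑ σ : Equiv.Perm (Fin m), (Equiv.Perm.sign σ : ℝ) * ∏ i, g (σ i) (t i) := by
      intro t
      rw [← Matrix.det_transpose, Matrix.det_apply']
      simp [Matrix.transpose]
    by_cases h : t ∈ Set.pi Set.univ S
    · rw [Set.indicator_of_mem h, hdet]
      refine Finset.sum_congr rfl fun σ _ => ?_
      congr 1
      exact Finset.prod_congr rfl fun i _ =>
        (Set.indicator_of_mem (h i (Set.mem_univ i)) _).symm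
    · rw [Set.indicator_of_notMem h]
      rw [Set.mem_univ_pi] at h
      push_neg at h
      obtain ⟨i, hi⟩ := h
      symm
      refine Finset.sum_eq_zero fun σ _ => ?_
      rw [Finset.prod_eq_zero (Finset.mem_univ i) (Set.indicator_of_notMem hi _), mul_zero]
  simp_rw [step1]
  have hint : ∀ (σ : Equiv.Perm (Fin m)),
      Integrable (fun t : Fin m → ℝ => ∏ i, Set.indicator (S i) (g (σ i)) (t i)) := by
    intro σ
    exact Integrable.fintype_prod fun i => (integrable_indicator_iff (hS i)).mpr (hg (σ i) i)
  rw [integral_finset_sum _ fun σ _ => (hint σ).const_mul _]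
  have step2 : ∀ σ : Equiv.Perm (Fin m),
      ∫ t : Fin m → ℝ, (Equiv.Perm.sign σ : ℝ) * ∏ i, Set.indicator (S i) (g (σ i)) (t i)
        = (Equiv.Perm.sign σ : ℝ) * ∏ i, ∫ x in S i, g (σ i) x := by
    intro σ
    rw [MeasureTheory.integral_const_mul, MeasureTheory.integral_fintype_prod_volume_eq_prod
      (f := fun i x => Set.indicator (S i) (g (σ i)) x)]
    congr 1
    exact Finset.prod_congr rfl fun i _ => integral_indicator (hS i)
  simp_rw [step2]
  rw [← Matrix.det_transpose, Matrix.det_apply']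
  simp [Matrix.transpose]

lemma det_telescope {n : ℕ} (h : ℕ → Fin (n+1) → ℝ) (h0 : ∀ k, h 0 k = 0) :
    Matrix.det (Matrix.of fun (j : Fin (n+1)) k => h (j:ℕ) k - h ((j:ℕ)+1) k)
      = Matrix.det (Matrix.of fun (j : Fin (n+1)) k => - h ((j:ℕ)+1) k) := by
  refine (Matrix.det_eq_of_forall_row_eq_smul_add_pred (fun _ => 1) ?_ ?_).symm
  · intro j
    simp [h0]
  · intro i j
    simp only [Matrix.of_apply, Fin.val_succ, Fin.coe_castSucc, one_mul]
    ring

lemma prod_Iio_swap {M : Type*} [CommMonoid M] {m : ℕ} (f : Fin m → Fin m → M) :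
    ∏ k, ∏ j ∈ Finset.Iio k, f j k = ∏ i, ∏ j ∈ Finset.Ioi i, f i j := by
  rw [Finset.prod_sigma', Finset.prod_sigma']
  refine Finset.prod_nbij' (fun x => ⟨x.2, x.1⟩) (fun x => ⟨x.2, x.1⟩) ?_ ?_ ?_ ?_ ?_ <;>
    simp only [Finset.mem_sigma, Finset.mem_univ, Finset.mem_Iio, Finset.mem_Ioi, true_and] <;>
    intros <;> first | rfl | assumption | trivial

lemma prod_antisym_swap {m : ℕ} (v : Fin m → ℝ) :
    ∏ k, ∏ j ∈ Finset.Iio k, (v j - v k)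
      = (∏ k : Fin m, ∏ j ∈ Finset.Iio k, (-1:ℝ)) * ∏ i, ∏ j ∈ Finset.Ioi i, (v j - v i) := by
  rw [← prod_Iio_swap (fun i j => v j - v i)]
  rw [← Finset.prod_mul_distrib]
  refine Finset.prod_congr rfl fun k _ => ?_
  rw [← Finset.prod_mul_distrib]
  exact Finset.prod_congr rfl fun j _ => by ring

lemma sgn_sq {m : ℕ} :
    (∏ k : Fin m, ∏ j ∈ Finset.Iio k, (-1:ℝ)) * (∏ k : Fin m, ∏ j ∈ Finset.Iio k, (-1:ℝ)) = 1 := by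
  rw [← Finset.prod_mul_distrib]
  refine Finset.prod_eq_one fun k _ => ?_
  rw [← Finset.prod_mul_distrib]
  exact Finset.prod_eq_one fun j _ => by norm_num

lemma finprod_to_Icc {M : Type*} [CommMonoid M] (m : ℕ) (f : ℕ → M) :
    ∏ k : Fin m, f ((k:ℕ)+1) = ∏ k ∈ Finset.Icc 1 m, f k := by
  rw [← Finset.Ico_add_one_right_eq_Icc, Finset.prod_Ico_eq_prod_range]
  rw [Fin.prod_univ_eq_prod_range (fun k => f (k+1)) m]
  simp [add_comm]

lemma finprod_Iio_to_range {M : Type*} [CommMonoid M] {m : ℕ} (k : Fin m) (g : ℕ → M) :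
    ∏ j ∈ Finset.Iio k, g (j:ℕ) = ∏ j ∈ Finset.range (k:ℕ), g j := by
  rw [← Nat.Iio_eq_range, ← Fin.map_valEmbedding_Iio, Finset.prod_map]
  rfl

lemma finprod2_to_Icc {M : Type*} [CommMonoid M] (m : ℕ) (f : ℕ → ℕ → M) :
    ∏ k : Fin m, ∏ j ∈ Finset.Iio k, f ((j:ℕ)+1) ((k:ℕ)+1)
      = ∏ k ∈ Finset.Icc 1 m, ∏ j ∈ Finset.Ico 1 k, f j k := by
  rw [← finprod_to_Icc m (fun k => ∏ j ∈ Finset.Ico 1 k, f j k)]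
  refine Finset.prod_congr rfl fun k _ => ?_
  rw [finprod_Iio_to_range k (fun j => f (j+1) ((k:ℕ)+1)), Finset.prod_Ico_eq_prod_range]
  simp [add_comm]

/-- symmetric Jacobi case of Theorem 1.1, even order `n = 2m`, at the level
of densities: multiplying the even-indexed factor by the integral of the odd-indexed factor
over the interlacing region gives `∏ 1/(2a+2k) ∏ (1-s_k²)^{2a+1} Δ(s²)²`. -/
theorem jacobi_even_decimation_density (a : ℝ) (ha : -1 < a) (m : ℕ) (hm : 1 ≤ m)
    (s : ℕ → ℝ) (hs1 : s 1 < 1)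
    (hdec : ∀ i, 1 ≤ i → i < m → s (i + 1) ≤ s i) (hsm : 0 ≤ s m) :
    (∏ k ∈ Finset.Icc 1 m, (1 - (s k) ^ 2) ^ a) *
      (∏ k ∈ Finset.Icc 1 m, ∏ j ∈ Finset.Ico 1 k, ((s j) ^ 2 - (s k) ^ 2)) *
      (∫ t in {t : Fin m → ℝ | ∀ i : Fin m,
          s ((i : ℕ) + 1) < t i ∧ t i < (if (i : ℕ) = 0 then 1 else s (i : ℕ))},
        (∏ k : Fin m, t k * (1 - (t k) ^ 2) ^ a) *
          ∏ k : Fin m, ∏ j ∈ Finset.Iio k, ((t j) ^ 2 - (t k) ^ 2)) =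
    (∏ k ∈ Finset.Icc 1 m, (1 : ℝ) / (2 * a + 2 * k)) *
      (∏ k ∈ Finset.Icc 1 m, (1 - (s k) ^ 2) ^ (2 * a + 1)) *
      ∏ k ∈ Finset.Icc 1 m, ∏ j ∈ Finset.Ico 1 k, ((s j) ^ 2 - (s k) ^ 2) ^ 2 := by
  obtain ⟨n, rfl⟩ : ∃ n, m = n + 1 := ⟨m - 1, by omega⟩
  have hchain : ∀ j k : ℕ, 1 ≤ j → j ≤ k → k ≤ n + 1 → s k ≤ s j := by
    intro j k hj hjk hk
    induction k, hjk using Nat.le_induction with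
    | base => exact le_rfl
    | succ k hk' ih =>
      exact le_trans (hdec k (le_trans hj hk') (by omega)) (ih (by omega))
  set S : Fin (n+1) → Set ℝ :=
    fun i => Set.Ioo (s ((i:ℕ)+1)) (if (i:ℕ) = 0 then 1 else s (i:ℕ)) with hSdef
  have hlo0 : ∀ i : Fin (n+1), 0 ≤ s ((i:ℕ)+1) := fun i =>
    le_trans hsm (hchain ((i:ℕ)+1) (n+1) (by omega) (by omega) le_rfl)
  have hhile : ∀ i : Fin (n+1), (if (i:ℕ) = 0 then 1 else s (i:ℕ)) ≤ (1:ℝ) := by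
    intro i
    by_cases h : (i:ℕ) = 0
    · simp [h]
    · rw [if_neg h]
      exact le_of_lt (lt_of_le_of_lt (hchain 1 (i:ℕ) le_rfl (by omega) (by omega)) hs1)
  have hlohi : ∀ i : Fin (n+1), s ((i:ℕ)+1) ≤ (if (i:ℕ) = 0 then 1 else s (i:ℕ)) := by
    intro i
    by_cases h : (i:ℕ) = 0
    · rw [if_pos h, h]
      exact hs1.le
    · rw [if_neg h]
      exact hdec (i:ℕ) (by omega) i.isLt
  have hregion : {t : Fin (n+1) → ℝ | ∀ i : Fin (n+1),
      s ((i : ℕ) + 1) < t i ∧ t i < (if (i : ℕ) = 0 then 1 else s (i : ℕ))}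
      = Set.pi Set.univ S := by
    ext t
    simp [hSdef, Set.mem_pi]
  set sgn : ℝ := ∏ k : Fin (n+1), ∏ j ∈ Finset.Iio k, (-1:ℝ) with hsgndef
  have hint : (fun t : Fin (n+1) → ℝ => (∏ k : Fin (n+1), t k * (1 - t k ^ 2) ^ a) *
      ∏ k : Fin (n+1), ∏ j ∈ Finset.Iio k, (t j ^ 2 - t k ^ 2))
      = fun t => sgn * Matrix.det (Matrix.of fun i k : Fin (n+1) => gj a (k:ℕ) (t i)) := by
    funext t
    have hdet1 : Matrix.det (Matrix.of fun i k : Fin (n+1) => gj a (k:ℕ) (t i))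
        = (∏ i : Fin (n+1), (t i * (1 - t i ^ 2) ^ a)) *
          ∏ i : Fin (n+1), ∏ j ∈ Finset.Ioi i, (t j ^ 2 - t i ^ 2) := by
      have e : (Matrix.of fun i k : Fin (n+1) => gj a (k:ℕ) (t i))
          = Matrix.of fun i k : Fin (n+1) =>
              (t i * (1 - t i ^ 2) ^ a) *
                (Matrix.of fun i k : Fin (n+1) => (Pj a (k:ℕ)).eval (t i ^ 2)) i k := by
        ext i k
        simp [gj]
      rw [e, Matrix.det_mul_column, ← Matrix.det_eval_matrixOfPolynomials_eq_det_vandermonde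
        (fun i => t i ^ 2) (fun k => Pj a (k:ℕ)) (fun k => Pj_natDegree a (k:ℕ))
        (fun k => Pj_monic a (k:ℕ)), Matrix.det_vandermonde]
    rw [hdet1, show (∏ k : Fin (n+1), ∏ j ∈ Finset.Iio k, (t j ^ 2 - t k ^ 2))
        = sgn * ∏ i : Fin (n+1), ∏ j ∈ Finset.Ioi i, (t j ^ 2 - t i ^ 2) from
      prod_antisym_swap (fun i => t i ^ 2)]
    ring
  rw [hregion, hint, MeasureTheory.integral_const_mul]
  have hSmeas : ∀ i, MeasurableSet (S i) := fun i => measurableSet_Ioo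
  have hg : ∀ k i : Fin (n+1), IntegrableOn (gj a (k:ℕ)) (S i) := by
    intro k i
    have h := gj_intervalIntegrable a ha (k:ℕ) (hlo0 i) (hlohi i) (hhile i)
    rw [intervalIntegrable_iff_integrableOn_Ioc_of_le (hlohi i)] at h
    exact h.mono_set Set.Ioo_subset_Ioc_self
  rw [integral_pi_det S hSmeas (fun k => gj a (k:ℕ)) hg]
  set hfun : ℕ → Fin (n+1) → ℝ :=
    fun j k => Gj a (k:ℕ) (if j = 0 then 1 else s j) with hfd
  have hmat : (Matrix.of fun i k : Fin (n+1) => ∫ x in S i, gj a (k:ℕ) x)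
      = Matrix.of fun j k : Fin (n+1) => hfun (j:ℕ) k - hfun ((j:ℕ)+1) k := by
    ext j k
    simp only [Matrix.of_apply, hfd, hSdef]
    rw [gj_integral a ha (k:ℕ) (hlo0 j) (hlohi j) (hhile j)]
    rw [if_neg (Nat.succ_ne_zero (j:ℕ))]
  rw [hmat, det_telescope hfun (fun k => by simp [hfd, Gj_one a ha])]
  have hmat2 : (Matrix.of fun j k : Fin (n+1) => - hfun ((j:ℕ)+1) k)
      = Matrix.of fun j k : Fin (n+1) => ((1 - s ((j:ℕ)+1) ^ 2) ^ (a+1)) *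
          ((Matrix.of fun j k : Fin (n+1) => (1 / (2*(a+1+(k:ℕ)))) *
            (Matrix.vandermonde (fun j : Fin (n+1) => s ((j:ℕ)+1) ^ 2)) j k) j k) := by
    ext j k
    simp only [Matrix.of_apply, hfd, Matrix.vandermonde_apply,
      if_neg (Nat.succ_ne_zero (j:ℕ))]
    rw [Gj, ← pow_mul]
    ring
  rw [hmat2, Matrix.det_mul_column, Matrix.det_mul_row, Matrix.det_vandermonde]
  have hW : sgn * (∏ k : Fin (n+1), ∏ j ∈ Finset.Iio k,
        (s ((j:ℕ)+1) ^ 2 - s ((k:ℕ)+1) ^ 2))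
      = ∏ i : Fin (n+1), ∏ j ∈ Finset.Ioi i, (s ((j:ℕ)+1) ^ 2 - s ((i:ℕ)+1) ^ 2) := by
    rw [show (∏ k : Fin (n+1), ∏ j ∈ Finset.Iio k, (s ((j:ℕ)+1) ^ 2 - s ((k:ℕ)+1) ^ 2))
        = sgn * ∏ i : Fin (n+1), ∏ j ∈ Finset.Ioi i, (s ((j:ℕ)+1) ^ 2 - s ((i:ℕ)+1) ^ 2) from
      prod_antisym_swap (fun i => s ((i:ℕ)+1) ^ 2), ← mul_assoc, sgn_sq, one_mul]
  rw [← hW]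
  have c1 : ∏ j : Fin (n+1), (1 - s ((j:ℕ)+1) ^ 2) ^ (a+1)
      = ∏ k ∈ Finset.Icc 1 (n+1), (1 - s k ^ 2) ^ (a+1) :=
    finprod_to_Icc (n+1) (fun k => (1 - s k ^ 2) ^ (a+1))
  have c2 : ∏ k : Fin (n+1), (1:ℝ) / (2*(a+1+(k:ℕ)))
      = ∏ k ∈ Finset.Icc 1 (n+1), (1:ℝ) / (2 * a + 2 * (k:ℕ)) := by
    rw [← finprod_to_Icc (n+1) (fun k => (1:ℝ) / (2 * a + 2 * (k:ℕ)))]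
    refine Finset.prod_congr rfl fun k _ => ?_
    push_cast
    ring_nf
  have c3 : ∏ k : Fin (n+1), ∏ j ∈ Finset.Iio k, (s ((j:ℕ)+1) ^ 2 - s ((k:ℕ)+1) ^ 2)
      = ∏ k ∈ Finset.Icc 1 (n+1), ∏ j ∈ Finset.Ico 1 k, (s j ^ 2 - s k ^ 2) :=
    finprod2_to_Icc (n+1) (fun j k => s j ^ 2 - s k ^ 2)
  rw [c1, c2, c3]
  have e1 : (∏ k ∈ Finset.Icc 1 (n+1), (1 - s k ^ 2) ^ a) *
      (∏ k ∈ Finset.Icc 1 (n+1), (1 - s k ^ 2) ^ (a+1))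
      = ∏ k ∈ Finset.Icc 1 (n+1), (1 - s k ^ 2) ^ (2 * a + 1) := by
    rw [← Finset.prod_mul_distrib]
    refine Finset.prod_congr rfl fun k hk => ?_
    rw [Finset.mem_Icc] at hk
    have hk0 : 0 ≤ s k := le_trans hsm (hchain k (n+1) hk.1 hk.2 le_rfl)
    have hk1 : s k < 1 := lt_of_le_of_lt (hchain 1 k le_rfl hk.1 hk.2) hs1
    have hpos : 0 < 1 - s k ^ 2 := by nlinarith
    rw [← Real.rpow_add hpos]
    congr 1
    ring
  have e2 : (∏ k ∈ Finset.Icc 1 (n+1), ∏ j ∈ Finset.Ico 1 k, (s j ^ 2 - s k ^ 2)) *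
      (∏ k ∈ Finset.Icc 1 (n+1), ∏ j ∈ Finset.Ico 1 k, (s j ^ 2 - s k ^ 2))
      = ∏ k ∈ Finset.Icc 1 (n+1), ∏ j ∈ Finset.Ico 1 k, (s j ^ 2 - s k ^ 2) ^ 2 := by
    rw [← Finset.prod_mul_distrib]
    refine Finset.prod_congr rfl fun k _ => ?_
    rw [← Finset.prod_mul_distrib]
    exact Finset.prod_congr rfl fun j _ => (sq _).symm
  calc (∏ k ∈ Finset.Icc 1 (n+1), (1 - s k ^ 2) ^ a) *
      (∏ k ∈ Finset.Icc 1 (n+1), ∏ j ∈ Finset.Ico 1 k, (s j ^ 2 - s k ^ 2)) *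
      (sgn * ((∏ k ∈ Finset.Icc 1 (n+1), (1 - s k ^ 2) ^ (a+1)) *
        ((∏ k ∈ Finset.Icc 1 (n+1), (1:ℝ) / (2 * a + 2 * (k:ℕ))) *
          (sgn * ∏ k ∈ Finset.Icc 1 (n+1), ∏ j ∈ Finset.Ico 1 k, (s j ^ 2 - s k ^ 2)))))
      = (sgn * sgn) * ((∏ k ∈ Finset.Icc 1 (n+1), (1:ℝ) / (2 * a + 2 * (k:ℕ))) *
          (((∏ k ∈ Finset.Icc 1 (n+1), (1 - s k ^ 2) ^ a) *
            (∏ k ∈ Finset.Icc 1 (n+1), (1 - s k ^ 2) ^ (a+1))) *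
          ((∏ k ∈ Finset.Icc 1 (n+1), ∏ j ∈ Finset.Ico 1 k, (s j ^ 2 - s k ^ 2)) *
            (∏ k ∈ Finset.Icc 1 (n+1), ∏ j ∈ Finset.Ico 1 k, (s j ^ 2 - s k ^ 2))))) := by
        ring
    _ = _ := by
        rw [sgn_sq, e1, e2, one_mul]
        ring
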